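/- Let f : ℝ^n → [0,∞) be a convex function and ℒ ⊆ ℝ^n an affine subspace such that the set 𝒞* := argmin_{x∈ℒ} f(x) is nonempty. Let x* be the unique element of 𝒞* of smallest Euclidean norm, i.e. x* = argmin{‖x‖² : x ∈ 𝒞*}. For each α > 0 the problem min_{x∈ℒ} f(x) + (α/2)‖x‖² has a unique minimizer x_α. Then lim_{α→0⁺} x_α = x*. -/

import Mathlib

open Filter

/-- Let `f : ℝⁿ → [0,∞)` be convex and `L ⊆ ℝⁿ` an affine subspace on which
`f` attains its minimum. Let `xstar` be the minimum-norm element of the argmin set `𝒞*`, and for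
each `α > 0` let `xa α` be the (unique) minimizer over `L` of `f x + (α/2)‖x‖²`.
Then `xa α → xstar` as `α → 0⁺`. -/
theorem statement0 (n : ℕ) (f : EuclideanSpace ℝ (Fin n) → ℝ)
    (hconv : ConvexOn ℝ Set.univ f) (hnonneg : ∀ x, 0 ≤ f x)
    (L : AffineSubspace ℝ (EuclideanSpace ℝ (Fin n)))
    (xstar : EuclideanSpace ℝ (Fin n))
    (hxstarL : xstar ∈ L)
    (hxstarmin : ∀ y ∈ L, f xstar ≤ f y)
    (hxstarnorm : ∀ y ∈ L, (∀ z ∈ L, f y ≤ f z) → ‖xstar‖ ≤ ‖y‖)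
    (xa : ℝ → EuclideanSpace ℝ (Fin n))
    (hxa : ∀ α : ℝ, 0 < α → xa α ∈ L ∧
      ∀ y ∈ L, f (xa α) + (α / 2) * ‖xa α‖ ^ 2 ≤ f y + (α / 2) * ‖y‖ ^ 2) :
    Tendsto xa (nhdsWithin 0 (Set.Ioi 0)) (nhds xstar) := by
  have hfc : Continuous f := by
    rw [← continuousOn_univ]
    exact hconv.continuousOn isOpen_univ
  have hLc : IsClosed (L : Set (EuclideanSpace ℝ (Fin n))) := L.closed_of_finiteDimensional
  -- norm bound
  have hbound : ∀ α : ℝ, 0 < α → ‖xa α‖ ≤ ‖xstar‖ := by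
    intro α hα
    have h1 := (hxa α hα).2 xstar hxstarL
    have h2 := hxstarmin (xa α) (hxa α hα).1
    have h3 : (α/2) * ‖xa α‖ ^ 2 ≤ (α/2) * ‖xstar‖ ^ 2 := by linarith
    have h4 : ‖xa α‖ ^ 2 ≤ ‖xstar‖ ^ 2 :=
      le_of_mul_le_mul_left h3 (by positivity)
    nlinarith [norm_nonneg (xa α), norm_nonneg xstar]
  -- value bound
  have hfbound : ∀ α : ℝ, 0 < α → f (xa α) ≤ f xstar + (α / 2) * ‖xstar‖ ^ 2 := by
    intro α hα
    have h1 := (hxa α hα).2 xstar hxstarL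
    nlinarith [norm_nonneg (xa α), sq_nonneg ‖xa α‖]
  -- uniqueness of the min-norm minimizer
  have huniq : ∀ x, x ∈ L → f x ≤ f xstar → ‖x‖ ≤ ‖xstar‖ → x = xstar := by
    intro x hxL hfx hnx
    set m : EuclideanSpace ℝ (Fin n) := (1/2 : ℝ) • x + (1/2 : ℝ) • xstar with hm
    have hmL : m ∈ L := by
      have := AffineSubspace.smul_vsub_vadd_mem L (1/2 : ℝ) hxL hxstarL hxstarL
      convert this using 1
      simp only [vsub_eq_sub, vadd_eq_add, hm]
      module
    have hfm : f m ≤ f xstar := by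
      have := hconv.2 (Set.mem_univ x) (Set.mem_univ xstar)
        (by norm_num : (0:ℝ) ≤ 1/2) (by norm_num : (0:ℝ) ≤ 1/2) (by norm_num)
      calc f m ≤ (1/2 : ℝ) * f x + (1/2 : ℝ) * f xstar := by simpa [hm, smul_eq_mul] using this
        _ ≤ f xstar := by linarith
    have hmmin : ∀ z ∈ L, f m ≤ f z := fun z hz => hfm.trans (hxstarmin z hz)
    have hns : ‖xstar‖ ≤ ‖m‖ := hxstarnorm m hmL hmmin
    have hnx' : ‖xstar‖ ≤ ‖x‖ :=
      hxstarnorm x hxL (fun z hz => hfx.trans (hxstarmin z hz))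
    have hx_eq : ‖x‖ = ‖xstar‖ := le_antisymm hnx hnx'
    -- parallelogram argument
    have hmnorm : ‖m‖ = (1/2 : ℝ) * ‖x + xstar‖ := by
      have : m = (1/2 : ℝ) • (x + xstar) := by simp only [hm]; module
      rw [this, norm_smul]
      simp
    have hadd : ‖x + xstar‖ ^ 2 = ‖x‖ ^ 2 + 2 * (inner ℝ x xstar : ℝ) + ‖xstar‖ ^ 2 :=
      norm_add_sq_real x xstar
    have hsub : ‖x - xstar‖ ^ 2 = ‖x‖ ^ 2 - 2 * (inner ℝ x xstar : ℝ) + ‖xstar‖ ^ 2 :=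
      norm_sub_sq_real x xstar
    have hkey : ‖x - xstar‖ ^ 2 ≤ 0 := by
      have h4 : ‖xstar‖ ^ 2 ≤ ((1/2 : ℝ) * ‖x + xstar‖) ^ 2 := by
        rw [← hmnorm]
        exact pow_le_pow_left₀ (norm_nonneg _) hns 2
      have hx2 : ‖x‖ ^ 2 = ‖xstar‖ ^ 2 := by rw [hx_eq]
      nlinarith [h4, hadd, hsub, hx2]
    have : x - xstar = 0 := by
      rw [← norm_eq_zero]
      nlinarith [norm_nonneg (x - xstar)]
    exact sub_eq_zero.mp this
  -- main convergence via ultrafilters and compactness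
  rw [tendsto_iff_ultrafilter]
  intro g hg
  have hmemIoi : ∀ᶠ α in (g : Filter ℝ), α ∈ Set.Ioi (0:ℝ) :=
    hg (self_mem_nhdsWithin)
  have hK : ∀ᶠ α in (g : Filter ℝ), xa α ∈ Metric.closedBall (0 : EuclideanSpace ℝ (Fin n)) ‖xstar‖ := by
    filter_upwards [hmemIoi] with α hα
    simpa [Metric.mem_closedBall, dist_eq_norm] using hbound α hα
  have hcpt : IsCompact (Metric.closedBall (0 : EuclideanSpace ℝ (Fin n)) ‖xstar‖) :=
    isCompact_closedBall _ _
  obtain ⟨x, hxK, hxle⟩ := hcpt.ultrafilter_le_nhds (g.map xa) (by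
    rwa [Ultrafilter.coe_map, le_principal_iff, mem_map])
  have htend : Tendsto xa (g : Filter ℝ) (nhds x) := hxle
  -- the limit of α along g is 0
  have hα0 : Tendsto (fun α : ℝ => α) (g : Filter ℝ) (nhds 0) :=
    (tendsto_id'.mpr hg).mono_right nhdsWithin_le_nhds
  -- x ∈ L
  have hmemL : ∀ᶠ α in (g : Filter ℝ), xa α ∈ L := by
    filter_upwards [hmemIoi] with α hα
    exact (hxa α hα).1
  have hxL : x ∈ L := hLc.mem_of_tendsto htend hmemL
  -- f x ≤ f xstar
  have hfx : f x ≤ f xstar := by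
    have h1 : Tendsto (fun α => f (xa α)) (g : Filter ℝ) (nhds (f x)) :=
      (hfc.continuousAt.tendsto).comp htend
    have h2 : Tendsto (fun α : ℝ => f xstar + (α / 2) * ‖xstar‖ ^ 2) (g : Filter ℝ)
        (nhds (f xstar + (0 / 2) * ‖xstar‖ ^ 2)) := by
      exact tendsto_const_nhds.add ((hα0.div_const 2).mul_const _)
    have h2' : Tendsto (fun α : ℝ => f xstar + (α / 2) * ‖xstar‖ ^ 2) (g : Filter ℝ)
        (nhds (f xstar)) := by simpa using h2
    refine le_of_tendsto_of_tendsto h1 h2' ?_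
    filter_upwards [hmemIoi] with α hα
    exact hfbound α hα
  -- ‖x‖ ≤ ‖xstar‖
  have hxn : ‖x‖ ≤ ‖xstar‖ := by
    simpa [Metric.mem_closedBall, dist_eq_norm] using hxK
  rw [huniq x hxL hfx hxn] at htend
  exact htend
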